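/- Let X be a regular topological space with closed neighborhood assignment U_x (x ∈ X) such that for every infinite Y ⊆ X there is y ∈ Y with {x ∈ Y : y ∉ U_x} infinite. Then there is a coloring c : [X]² → {0,1,2} such that: any Y with c''[Y]² = {1} is finite, and any Y with c''[Y]² ⊆ {0} or c''[Y]² ⊆ {2} is discrete. Consequently X does not satisfy X → (ω+1)²₃. -/

import Mathlib

open Classical in
/-- The coloring built from a well-ordering: for `x` below `y` in the
well-ordering, color `1` if `x ∈ U y`, color `2` if `x ∉ U y` and `y ∈ U x`,
color `0` otherwise. -/
noncomputable def stmt6Col {X : Type*} (U : X → Set X) (x y : X) : Fin 3 :=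
  if WellOrderingRel x y then (if x ∈ U y then 1 else if y ∈ U x then 2 else 0)
  else if WellOrderingRel y x then (if y ∈ U x then 1 else if x ∈ U y then 2 else 0)
  else 0

section helpers

variable {X : Type*} (U : X → Set X)

lemma stmt6Col_symm (x y : X) : stmt6Col U x y = stmt6Col U y x := by
  classical
  unfold stmt6Col
  rcases trichotomous_of WellOrderingRel x y with h | h | h
  · have h' : ¬ WellOrderingRel y x := fun h' => (irrefl_of WellOrderingRel x)
      (trans_of WellOrderingRel h h')
    simp [h, h']
  · subst h; rfl
  · have h' : ¬ WellOrderingRel x y := fun h' => (irrefl_of WellOrderingRel x)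
      (trans_of WellOrderingRel h' h)
    simp [h, h']

lemma stmt6Col_one {x y : X} (h : WellOrderingRel x y) (h1 : stmt6Col U x y = 1) :
    x ∈ U y := by
  classical
  unfold stmt6Col at h1
  by_contra hx
  simp only [if_pos h, if_neg hx] at h1
  split_ifs at h1 <;> simp_all

lemma stmt6Col_two {x y : X} (h : WellOrderingRel x y) (h2 : stmt6Col U x y = 2) :
    x ∉ U y ∧ y ∈ U x := by
  classical
  unfold stmt6Col at h2
  simp only [if_pos h] at h2
  split_ifs at h2 with h' h'' <;> simp_all

lemma stmt6Col_zero {x y : X} (h : WellOrderingRel x y) (h0 : stmt6Col U x y = 0) :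
    x ∉ U y ∧ y ∉ U x := by
  classical
  unfold stmt6Col at h0
  simp only [if_pos h] at h0
  split_ifs at h0 with h' h'' <;> simp_all

/-- From an isolating neighborhood at each point, discreteness of the subspace. -/
lemma stmt6_discrete_of_isolating {X : Type*} [TopologicalSpace X] {Y : Set X}
    (h : ∀ y ∈ Y, ∃ V ∈ nhds y, V ∩ Y ⊆ {y}) : DiscreteTopology Y := by
  rw [discreteTopology_subtype_iff]
  intro y hy
  rw [Filter.inf_principal_eq_bot]
  obtain ⟨V, hV, hVY⟩ := h y hy
  have h1 : V ∈ nhdsWithin y {y}ᶜ := nhdsWithin_le_nhds hV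
  have h2 : {y}ᶜ ∈ nhdsWithin y {y}ᶜ := self_mem_nhdsWithin
  filter_upwards [h1, h2] with x hxV hxne hxY
  exact hxne (hVY ⟨hxV, hxY⟩)

end helpers

theorem stmt_6 {X : Type*} [TopologicalSpace X] [RegularSpace X]
    (U : X → Set X) (hU : ∀ x : X, U x ∈ nhds x ∧ IsClosed (U x))
    (hbig : ∀ Y : Set X, Y.Infinite → ∃ y ∈ Y, {x ∈ Y | y ∉ U x}.Infinite) :
    (∃ c : X → X → Fin 3, (∀ x y, c x y = c y x) ∧
      (∀ Y : Set X,
        (∀ x ∈ Y, ∀ y ∈ Y, x ≠ y → c x y = 1) → Y.Finite) ∧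
      (∀ Y : Set X,
        (∀ x ∈ Y, ∀ y ∈ Y, x ≠ y → c x y = 0) → DiscreteTopology Y) ∧
      (∀ Y : Set X,
        (∀ x ∈ Y, ∀ y ∈ Y, x ≠ y → c x y = 2) → DiscreteTopology Y)) ∧
    ¬ (∀ c : X → X → Fin 3, (∀ x y, c x y = c y x) →
        ∃ Y : Set X, Nonempty (Y ≃ₜ OnePoint ℕ) ∧
          ∀ x ∈ Y, ∀ y ∈ Y, ∀ x' ∈ Y, ∀ y' ∈ Y, x ≠ y → x' ≠ y' → c x y = c x' y') := by
  classical
  have wo : IsWellOrder X WellOrderingRel := WellOrderingRel.isWellOrder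
  set r : X → X → Prop := WellOrderingRel with hr
  -- The three properties of the coloring.
  have hfin : ∀ Y : Set X,
      (∀ x ∈ Y, ∀ y ∈ Y, x ≠ y → stmt6Col U x y = 1) → Y.Finite := by
    intro Y hhom
    by_contra hYinf
    have hYinf : Y.Infinite := hYinf
    -- the set of "witnesses"
    set P : Set X := {y | y ∈ Y ∧ {x ∈ Y | y ∉ U x}.Infinite} with hP
    have hPne : P.Nonempty := by
      obtain ⟨y, hy, hZ⟩ := hbig Y hYinf
      exact ⟨y, hy, hZ⟩
    set y := wo.wf.min P hPne with hy
    have hymem : y ∈ P := wo.wf.min_mem P hPne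
    obtain ⟨hyY, hZ⟩ := hymem
    set Z := {x ∈ Y | y ∉ U x} with hZdef
    by_cases hcase : ∃ x ∈ Z, r y x
    · obtain ⟨x, ⟨hxY, hxU⟩, hryx⟩ := hcase
      have hne : y ≠ x := fun h => (irrefl_of r x) (h ▸ hryx)
      have := stmt6Col_one U hryx (hhom y hyY x hxY hne)
      exact hxU this
    · push_neg at hcase
      have hZ' : (Z \ {y}).Infinite := hZ.diff (Set.finite_singleton y)
      obtain ⟨y', ⟨⟨hy'Y, hy'U⟩, hy'ne⟩, hZ''⟩ := hbig _ hZ'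
      have hy'P : y' ∈ P := by
        refine ⟨hy'Y, Set.Infinite.mono ?_ hZ''⟩
        rintro x ⟨⟨⟨hxY, _⟩, _⟩, hxU⟩
        exact ⟨hxY, hxU⟩
      have hry' : r y' y := by
        rcases trichotomous_of r y' y with h | h | h
        · exact h
        · exact absurd h (by simpa using hy'ne)
        · exact absurd h (hcase y' ⟨hy'Y, hy'U⟩)
      exact wo.wf.not_lt_min P hy'P hry'
  have hdisc0 : ∀ Y : Set X,
      (∀ x ∈ Y, ∀ y ∈ Y, x ≠ y → stmt6Col U x y = 0) → DiscreteTopology Y := by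
    intro Y hhom
    apply stmt6_discrete_of_isolating
    intro y hyY
    refine ⟨U y, (hU y).1, ?_⟩
    rintro x ⟨hxU, hxY⟩
    by_contra hne
    simp only [Set.mem_singleton_iff] at hne
    have h0 := hhom x hxY y hyY hne
    rcases trichotomous_of r x y with h | h | h
    · exact (stmt6Col_zero U h h0).1 hxU
    · exact hne h
    · have h0' : stmt6Col U y x = 0 := (stmt6Col_symm U x y) ▸ h0
      exact (stmt6Col_zero U h h0').2 hxU
  have hdisc2 : ∀ Y : Set X,
      (∀ x ∈ Y, ∀ y ∈ Y, x ≠ y → stmt6Col U x y = 2) → DiscreteTopology Y := by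
    intro Y hhom
    apply stmt6_discrete_of_isolating
    intro y hyY
    -- every point of Y in U y other than y is above y in the well-order
    have habove : ∀ x, x ∈ (Y ∩ U y) \ {y} → r y x := by
      rintro x ⟨⟨hxY, hxU⟩, hxne⟩
      simp only [Set.mem_singleton_iff] at hxne
      rcases trichotomous_of r x y with h | h | h
      · exact absurd hxU (stmt6Col_two U h (hhom x hxY y hyY hxne)).1
      · exact absurd h hxne
      · exact h
    by_cases hS : ((Y ∩ U y) \ {y}).Nonempty
    · set x₀ := wo.wf.min _ hS with hx₀
      have hx₀mem := wo.wf.min_mem _ hS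
      obtain ⟨⟨hx₀Y, hx₀U⟩, hx₀ne⟩ := hx₀mem
      simp only [Set.mem_singleton_iff] at hx₀ne
      have hryx₀ : r y x₀ := habove x₀ ⟨⟨hx₀Y, hx₀U⟩, hx₀ne⟩
      have h2 := stmt6Col_two U hryx₀ (hhom y hyY x₀ hx₀Y (fun h => hx₀ne h.symm))
      refine ⟨U y ∩ (U x₀)ᶜ, Filter.inter_mem (hU y).1
        ((hU x₀).2.isOpen_compl.mem_nhds h2.1), ?_⟩
      rintro x ⟨⟨hxUy, hxUx₀⟩, hxY⟩
      by_contra hne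
      simp only [Set.mem_singleton_iff] at hne
      have hxS : x ∈ (Y ∩ U y) \ {y} := ⟨⟨hxY, hxUy⟩, hne⟩
      have hnex₀ : x ≠ x₀ := fun h => hxUx₀ (by rw [h]; exact mem_of_mem_nhds (hU x₀).1)
      have hrx₀x : r x₀ x := by
        rcases trichotomous_of r x₀ x with h | h | h
        · exact h
        · exact absurd h.symm hnex₀
        · exact absurd h (wo.wf.not_lt_min _ hxS)
      have := (stmt6Col_two U hrx₀x (hhom x₀ hx₀Y x hxY hnex₀.symm)).2
      exact hxUx₀ this
    · refine ⟨U y, (hU y).1, ?_⟩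
      rintro x ⟨hxU, hxY⟩
      by_contra hne
      exact hS ⟨x, ⟨hxY, hxU⟩, hne⟩
  refine ⟨⟨stmt6Col U, stmt6Col_symm U, hfin, hdisc0, hdisc2⟩, ?_⟩
  intro hpart
  obtain ⟨Y, ⟨e⟩, hmono⟩ := hpart (stmt6Col U) (stmt6Col_symm U)
  -- Y is infinite
  have hinfOP : Infinite (OnePoint ℕ) := Infinite.of_injective _ OnePoint.coe_injective
  have hYinf : Infinite Y := Infinite.of_injective e.symm e.symm.injective
  -- pick two distinct points of Y
  haveI := hYinf
  obtain ⟨⟨a, ha⟩, ⟨b, hb⟩, hab⟩ := exists_pair_ne Y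
  have hab' : a ≠ b := fun h => hab (Subtype.ext h)
  -- case on the constant color
  have hconst : ∀ x ∈ Y, ∀ z ∈ Y, x ≠ z → stmt6Col U x z = stmt6Col U a b :=
    fun x hx z hz hxz => hmono x hx z hz a ha b hb hxz hab'
  have hnotdisc : ¬ DiscreteTopology Y := by
    intro hd
    have : DiscreteTopology (OnePoint ℕ) := e.symm.isEmbedding.discreteTopology
    have : Finite (OnePoint ℕ) := finite_of_compact_of_discrete
    exact not_finite (OnePoint ℕ)
  have hv : stmt6Col U a b = 0 ∨ stmt6Col U a b = 1 ∨ stmt6Col U a b = 2 := by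
    have : ∀ v : Fin 3, v = 0 ∨ v = 1 ∨ v = 2 := by decide
    exact this _
  rcases hv with hv | hv | hv
  · exact hnotdisc (hdisc0 Y (fun x hx z hz hxz => (hconst x hx z hz hxz).trans hv))
  · have := hfin Y (fun x hx z hz hxz => (hconst x hx z hz hxz).trans hv)
    exact this.not_infinite (Set.infinite_coe_iff.mp hYinf)
  · exact hnotdisc (hdisc2 Y (fun x hx z hz hxz => (hconst x hx z hz hxz).trans hv))
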